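/- For every n ≥ 3, consider the stateless protocol on the complete directed graph K_n (all ordered pairs of distinct nodes are edges) with label space Σ = {0,1}, in which each node assigns the same bit to all of its outgoing edges, ignoring its input, via the reaction function: output 0 on all outgoing edges if every incoming edge is labeled 0, and output 1 on all outgoing edges otherwise. Then the all-zeros labeling and the all-ones labeling are two distinct stable labelings, yet the protocol is label (n−2)-stabilizing: for every r < n−1, every r-fair schedule and every initial labeling, the labeling sequence is eventually constant. -/

import Mathlib

/-- A stateless protocol on the directed graph with node set `Fin n` and edge set
`E`, with label space `Λ`.  `react i` maps the current labeling (of which only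
the values on `i`'s incoming edges may be used, per `react_local`) together with
`i`'s input bit to a new labeling (of which only the values on `i`'s outgoing
edges are ever read) together with an output bit. -/
structure StatelessProtocol (n : ℕ) (E : Finset (Fin n × Fin n)) (Λ : Type) where
  react : Fin n → ({e // e ∈ E} → Λ) → Bool → ({e // e ∈ E} → Λ) × Bool
  react_local : ∀ (i : Fin n) (ℓ ℓ' : {e // e ∈ E} → Λ) (x : Bool),
      (∀ e : {e // e ∈ E}, e.1.2 = i → ℓ e = ℓ' e) → react i ℓ x = react i ℓ' x

namespace StatelessProtocol

variable {n : ℕ} {E : Finset (Fin n × Fin n)} {Λ : Type}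

/-- `run P x σ ℓ0 t` is the labeling after `t` time steps of the run of `P` on
input `x` from initial labeling `ℓ0`, where `σ t` is the set of nodes activated
at time step `t + 1`. -/
def run (P : StatelessProtocol n E Λ) (x : Fin n → Bool) (σ : ℕ → Finset (Fin n))
    (ℓ0 : {e // e ∈ E} → Λ) : ℕ → {e // e ∈ E} → Λ
  | 0 => ℓ0
  | t + 1 => fun e =>
      if e.1.1 ∈ σ t then (P.react e.1.1 (run P x σ ℓ0 t) (x e.1.1)).1 e
      else run P x σ ℓ0 t e

/-- A schedule is `r`-fair if every node is activated at least once in every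
window of `r` consecutive time steps. -/
def Fair (σ : ℕ → Finset (Fin n)) (r : ℕ) : Prop :=
  ∀ (i : Fin n) (t : ℕ), ∃ s, t ≤ s ∧ s < t + r ∧ i ∈ σ s

/-- A labeling is stable for input `x` if every reaction function is at a fixed
point: each node's prescribed outgoing labels coincide with the current ones. -/
def Stable (P : StatelessProtocol n E Λ) (x : Fin n → Bool)
    (ℓ : {e // e ∈ E} → Λ) : Prop :=
  ∀ e : {e // e ∈ E}, (P.react e.1.1 ℓ (x e.1.1)).1 e = ℓ e

/-- The labeling after `t` steps of the synchronous run (all nodes activated at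
every step). -/
def syncRun (P : StatelessProtocol n E Λ) (x : Fin n → Bool)
    (ℓ0 : {e // e ∈ E} → Λ) : ℕ → {e // e ∈ E} → Λ :=
  P.run x (fun _ => Finset.univ) ℓ0

/-- The outputs at time step `t` of the synchronous run (the value at time `0`
is a dummy value). -/
def syncOut (P : StatelessProtocol n E Λ) (x : Fin n → Bool)
    (ℓ0 : {e // e ∈ E} → Λ) : ℕ → Fin n → Bool
  | 0 => fun _ => false
  | t + 1 => fun i => (P.react i (P.syncRun x ℓ0 t) (x i)).2

/-- Output stabilization under the synchronous schedule. -/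
def OutputStabilizing (P : StatelessProtocol n E Λ) : Prop :=
  ∀ x ℓ0, ∃ T, ∀ t, T ≤ t → P.syncOut x ℓ0 t = P.syncOut x ℓ0 T

/-- Label stabilization under the synchronous schedule. -/
def LabelStabilizing (P : StatelessProtocol n E Λ) : Prop :=
  ∀ x ℓ0, ∃ T, ∀ t, T ≤ t → P.syncRun x ℓ0 t = P.syncRun x ℓ0 T

/-- `P` computes `f` if on every input and from every initial labeling, every
node's output sequence converges to `f x` under the synchronous schedule. -/
def Computes (P : StatelessProtocol n E Λ) (f : (Fin n → Bool) → Bool) : Prop :=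
  ∀ x ℓ0, ∃ T, ∀ t, T ≤ t → ∀ i, P.syncOut x ℓ0 t i = f x

end StatelessProtocol

/-- The complete directed graph on `Fin n`. -/
def Kn (n : ℕ) : Finset (Fin n × Fin n) :=
  Finset.univ.filter (fun p => p.1 ≠ p.2)

/-- The protocol on the complete graph `K_n` with label space `{0,1}` in which a
node sends `0` on all its outgoing edges if all its incoming edges are labeled
`0`, and sends `1` on all its outgoing edges otherwise; the input is ignored. -/
def orProtocol (n : ℕ) : StatelessProtocol n (Kn n) Bool where
  react i ℓ _x :=
    (fun _ => if (∀ e : {e // e ∈ Kn n}, e.1.2 = i → ℓ e = false) then false else true,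
     false)
  react_local := by
    intro i ℓ ℓ' x h
    have hiff : (∀ e : {e // e ∈ Kn n}, e.1.2 = i → ℓ e = false) ↔
        (∀ e : {e // e ∈ Kn n}, e.1.2 = i → ℓ' e = false) := by
      constructor <;> intro hh e he
      · rw [← h e he]; exact hh e he
      · rw [h e he]; exact hh e he
    simp only [hiff]

open StatelessProtocol in
/-- For `n ≥ 3`, the protocol `orProtocol n` on the complete
directed graph `K_n` has the all-zeros and all-ones labelings as two distinct
stable labelings, yet for every `r < n - 1`, every `r`-fair schedule, every
input and every initial labeling, its labeling sequence is eventually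
constant. -/
theorem orProtocol_two_stable_but_stabilizing (n : ℕ) (hn : 3 ≤ n) :
    (∀ x : Fin n → Bool,
        (orProtocol n).Stable x (fun _ => false) ∧
        (orProtocol n).Stable x (fun _ => true)) ∧
    (fun _ : {e // e ∈ Kn n} => false) ≠ (fun _ => true) ∧
    (∀ r : ℕ, r < n - 1 → ∀ σ : ℕ → Finset (Fin n),
      (∀ t, (σ t).Nonempty) → Fair σ r →
      ∀ (x : Fin n → Bool) (ℓ0 : {e // e ∈ Kn n} → Bool),
        ∃ T, ∀ t, T ≤ t →
          (orProtocol n).run x σ ℓ0 t = (orProtocol n).run x σ ℓ0 T) := by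
  have hn0 : 0 < n := by omega
  have hn1 : 1 < n := by omega
  have hzo : (⟨0, hn0⟩ : Fin n) ≠ ⟨1, hn1⟩ := by
    intro h; exact absurd (congrArg Fin.val h) (by simp)
  -- a canonical "other" node
  set other : Fin n → Fin n := fun i => if i = ⟨0, hn0⟩ then ⟨1, hn1⟩ else ⟨0, hn0⟩ with hother_def
  have hother : ∀ i, other i ≠ i := by
    intro i
    show (if i = ⟨0, hn0⟩ then (⟨1, hn1⟩ : Fin n) else ⟨0, hn0⟩) ≠ i
    split
    · rename_i h; rw [h]; exact hzo.symm
    · rename_i h; exact fun hh => h hh.symm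
  have hmk : ∀ (j i : Fin n), j ≠ i → (j, i) ∈ Kn n := by
    intro j i h
    exact Finset.mem_filter.mpr ⟨Finset.mem_univ _, h⟩
  have hedge : ∀ e : {e // e ∈ Kn n}, e.1.1 ≠ e.1.2 :=
    fun e => (Finset.mem_filter.mp e.2).2
  -- characterization of the reaction function
  have hreactF : ∀ (i : Fin n) (ℓ : {e // e ∈ Kn n} → Bool) (xx : Bool) (e : {e // e ∈ Kn n}),
      (((orProtocol n).react i ℓ xx).1 e = false ↔
        ∀ e' : {e // e ∈ Kn n}, e'.1.2 = i → ℓ e' = false) := by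
    intro i ℓ xx e
    unfold orProtocol
    dsimp only
    split
    · rename_i h; simpa using h
    · rename_i h; simpa using h
  have hreactC : ∀ (i : Fin n) (ℓ : {e // e ∈ Kn n} → Bool) (xx : Bool)
      (e e' : {e // e ∈ Kn n}),
      ((orProtocol n).react i ℓ xx).1 e = ((orProtocol n).react i ℓ xx).1 e' := by
    intro i ℓ xx e e'
    unfold orProtocol
    dsimp only
  refine ⟨?_, ?_, ?_⟩
  · intro x
    constructor
    · intro e
      exact (hreactF _ _ _ _).mpr (fun _ _ => rfl)
    · intro e
      show _ = true
      have h : ¬ (((orProtocol n).react e.1.1 (fun _ => true) (x e.1.1)).1 e = false) := by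
        rw [hreactF]
        intro hall
        exact absurd (hall ⟨(other e.1.1, e.1.1), hmk _ _ (hother _)⟩ rfl) (by simp)
      revert h
      cases ((orProtocol n).react e.1.1 (fun _ => true) (x e.1.1)).1 e <;> simp
  · intro h
    have := congrFun h ⟨(⟨0, hn0⟩, ⟨1, hn1⟩), hmk _ _ hzo⟩
    simp at this
  · intro r hr σ hne hfair x ℓ0
    set P := orProtocol n with hP
    set L := P.run x σ ℓ0 with hL
    have hstep : ∀ t (e : {e // e ∈ Kn n}), L (t+1) e =
        if e.1.1 ∈ σ t then (P.react e.1.1 (L t) (x e.1.1)).1 e else L t e := by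
      intro t e
      rw [hL, hP, StatelessProtocol.run]
    have hstepT : ∀ t (e : {e // e ∈ Kn n}), e.1.1 ∈ σ t →
        (L (t+1) e = false ↔ ∀ e' : {e // e ∈ Kn n}, e'.1.2 = e.1.1 → L t e' = false) := by
      intro t e he
      rw [hstep, if_pos he, hP]
      exact hreactF _ _ _ _
    have hstepN : ∀ t (e : {e // e ∈ Kn n}), e.1.1 ∉ σ t → L (t+1) e = L t e := by
      intro t e he
      rw [hstep, if_neg he]
    -- uniformity of a node's outgoing labels after it has fired
    have hfired : ∀ t (i : Fin n), (∃ s, s < t ∧ i ∈ σ s) →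
        ∀ e e' : {e // e ∈ Kn n}, e.1.1 = i → e'.1.1 = i → L t e = L t e' := by
      intro t
      induction t with
      | zero => intro i ⟨s, hs, _⟩ _ _ _ _; omega
      | succ t ih =>
        intro i hex e e' he he'
        by_cases hi : i ∈ σ t
        · rw [hstep, hstep, he, he', if_pos hi, if_pos hi, hP]
          exact hreactC _ _ _ _ _
        · rw [hstepN t e (he ▸ hi), hstepN t e' (he' ▸ hi)]
          obtain ⟨s, hs, hsi⟩ := hex
          have hst : s < t := by
            rcases Nat.lt_succ_iff_lt_or_eq.mp hs with h | h
            · exact h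
            · exact absurd hsi (h ▸ hi)
          exact ih i ⟨s, hst, hsi⟩ e e' he he'
    have hu : ∀ t, r ≤ t → ∀ e e' : {e // e ∈ Kn n}, e.1.1 = e'.1.1 → L t e = L t e' := by
      intro t ht e e' h
      obtain ⟨s, _, hs, hsi⟩ := hfair e.1.1 0
      exact hfired t e.1.1 ⟨s, by omega, hsi⟩ e e' rfl h.symm
    -- node values
    set eo : Fin n → {e // e ∈ Kn n} := fun i => ⟨(i, other i), hmk _ _ (hother i).symm⟩ with heo
    set b : ℕ → Fin n → Bool := fun t i => L t (eo i) with hb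
    have hLb : ∀ t, r ≤ t → ∀ e : {e // e ∈ Kn n}, L t e = b t e.1.1 := by
      intro t ht e
      exact hu t ht e (eo e.1.1) rfl
    -- endgame lemmas: all-false and all-true labelings persist
    have hAllFalse : ∀ T, (∀ e, L T e = false) → ∀ t, T ≤ t → ∀ e, L t e = L T e := by
      intro T hF t ht
      induction t, ht using Nat.le_induction with
      | base => intro e; rfl
      | succ t ht ih =>
        intro e
        by_cases hi : e.1.1 ∈ σ t
        · rw [hF e]
          exact (hstepT t e hi).mpr (fun e' _ => (ih e').trans (hF e'))
        · rw [hstepN t e hi]; exact ih e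
    have hAllTrue : ∀ T, (∀ e, L T e = true) → ∀ t, T ≤ t → ∀ e, L t e = L T e := by
      intro T hF t ht
      induction t, ht using Nat.le_induction with
      | base => intro e; rfl
      | succ t ht ih =>
        intro e
        by_cases hi : e.1.1 ∈ σ t
        · rw [hF e]
          have hnf : ¬ (L (t+1) e = false) := by
            rw [hstepT t e hi]
            intro hall
            have := hall ⟨(other e.1.1, e.1.1), hmk _ _ (hother _)⟩ rfl
            rw [ih, hF] at this
            exact absurd this (by simp)
          revert hnf
          cases L (t+1) e <;> simp
        · rw [hstepN t e hi]; exact ih e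
    -- the set of "true" nodes
    set S : ℕ → Finset (Fin n) := fun t => Finset.univ.filter (fun i => b t i = true) with hS_def
    have hmemS : ∀ t i, i ∈ S t ↔ b t i = true := by
      intro t i; simp [hS_def]
    have hS : ∀ t, r ≤ t → ∀ i, (i ∈ S (t+1) ↔
        if i ∈ σ t then (∃ j ∈ S t, j ≠ i) else i ∈ S t) := by
      intro t ht i
      rw [hmemS]
      have heoi : (eo i).1.1 = i := rfl
      by_cases hi : i ∈ σ t
      · rw [if_pos hi]
        have hiff := hstepT t (eo i) (heoi ▸ hi)
        rw [heoi] at hiff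
        constructor
        · intro htrue
          have hnall : ¬ (∀ e' : {e // e ∈ Kn n}, e'.1.2 = i → L t e' = false) := by
            intro hall
            have := hiff.mpr hall
            rw [show b (t+1) i = L (t+1) (eo i) from rfl] at htrue
            rw [this] at htrue
            exact absurd htrue (by simp)
          push_neg at hnall
          obtain ⟨e', he'2, he'v⟩ := hnall
          refine ⟨e'.1.1, ?_, he'2 ▸ hedge e'⟩
          rw [hmemS]
          have hbe : b t e'.1.1 = L t e' := (hLb t ht e').symm
          rw [hbe]
          revert he'v
          cases L t e' <;> simp
        · rintro ⟨j, hjS, hji⟩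
          have hjt : b t j = true := (hmemS t j).mp hjS
          have hnall : ¬ (∀ e' : {e // e ∈ Kn n}, e'.1.2 = i → L t e' = false) := by
            intro hall
            have := hall ⟨(j, i), hmk _ _ hji⟩ rfl
            rw [hLb t ht] at this
            rw [this] at hjt
            exact absurd hjt (by simp)
          have : ¬ (L (t+1) (eo i) = false) := fun h => hnall (hiff.mp h)
          rw [show b (t+1) i = L (t+1) (eo i) from rfl]
          revert this
          cases L (t+1) (eo i) <;> simp
      · rw [if_neg hi, hmemS]
        rw [show b (t+1) i = L (t+1) (eo i) from rfl, hstepN t (eo i) (heoi ▸ hi)]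
    -- Main case analysis
    by_cases hc0 : ∃ t, r ≤ t ∧ S t = ∅
    · obtain ⟨t, ht, hSt⟩ := hc0
      refine ⟨t, fun s hs => funext fun e => ?_⟩
      apply hAllFalse t ?_ s hs
      intro e'
      rw [hLb t ht e']
      by_contra h
      have hmem : e'.1.1 ∈ S t := (hmemS t e'.1.1).mpr (by revert h; cases b t e'.1.1 <;> simp)
      rw [hSt] at hmem
      exact absurd hmem (Finset.notMem_empty _)
    · push_neg at hc0
      by_cases hc2 : ∃ t, r ≤ t ∧ 2 ≤ (S t).card
      · obtain ⟨t, ht, hSt⟩ := hc2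
        have hgrow : ∀ s, r ≤ s → 2 ≤ (S s).card → S s ⊆ S (s+1) ∧ σ s ⊆ S (s+1) := by
          intro s hs h2
          constructor
          · intro i hi
            rw [hS s hs]
            by_cases hiσ : i ∈ σ s
            · rw [if_pos hiσ]
              exact Finset.exists_mem_ne (by omega) i
            · rw [if_neg hiσ]; exact hi
          · intro i hi
            rw [hS s hs, if_pos hi]
            exact Finset.exists_mem_ne (by omega) i
        have hchain : ∀ c, t ≤ c → S t ⊆ S c := by
          intro c hc
          induction c, hc using Nat.le_induction with
          | base => exact subset_rfl
          | succ c hc ih =>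
            exact ih.trans (hgrow c (by omega) (le_trans hSt (Finset.card_le_card ih))).1
        have hchain2 : ∀ a c, t ≤ a → a ≤ c → S a ⊆ S c := by
          intro a c ha hac
          induction c, hac using Nat.le_induction with
          | base => exact subset_rfl
          | succ c hc ih =>
            refine ih.trans (hgrow c (by omega) ?_).1
            exact le_trans hSt (Finset.card_le_card ((hchain c (by omega)).trans subset_rfl |>.trans (subset_rfl)))
        have huniv : S (t+r) = Finset.univ := by
          apply Finset.eq_univ_of_forall
          intro i
          obtain ⟨s, hts, hsr, hsi⟩ := hfair i t
          have h1 : σ s ⊆ S (s+1) :=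
            (hgrow s (by omega) (le_trans hSt (Finset.card_le_card (hchain s hts)))).2
          exact hchain2 (s+1) (t+r) (by omega) (by omega) (h1 hsi)
        refine ⟨t+r, fun s hs => funext fun e => ?_⟩
        apply hAllTrue (t+r) ?_ s hs
        intro e'
        rw [hLb (t+r) (by omega) e']
        exact (hmemS _ _).mp (huniv ▸ Finset.mem_univ e'.1.1)
      · exfalso
        push_neg at hc2
        have h1 : ∀ t, r ≤ t → (S t).card = 1 := by
          intro t ht
          have h2 := hc2 t ht
          have h3 : 1 ≤ (S t).card :=
            Finset.card_pos.mpr (hc0 t ht)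
          omega
        set j : ℕ → Fin n := fun t => if h : r ≤ t then
            (Finset.card_eq_one.mp (h1 t h)).choose else ⟨0, hn0⟩ with hj_def
        have hj : ∀ t, r ≤ t → S t = {j t} := by
          intro t ht
          simp only [hj_def, dif_pos ht]
          exact (Finset.card_eq_one.mp (h1 t ht)).choose_spec
        have hσsub : ∀ t, r ≤ t → ∀ i ∈ σ t, i = j t ∨ i = j (t+1) := by
          intro t ht i hi
          by_cases hij : i = j t
          · exact Or.inl hij
          · right
            have hmem : i ∈ S (t+1) := by
              rw [hS t ht, if_pos hi]
              exact ⟨j t, by rw [hj t ht]; exact Finset.mem_singleton_self _,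
                fun h => hij h.symm⟩
            rw [hj (t+1) (by omega)] at hmem
            exact Finset.mem_singleton.mp hmem
        have hsub : (Finset.univ : Finset (Fin n)) ⊆ (Finset.Icc r (r+r)).image j := by
          intro i _
          obtain ⟨s, hrs, hsr, hsi⟩ := hfair i r
          rcases hσsub s hrs i hsi with h | h
          · exact Finset.mem_image.mpr ⟨s, Finset.mem_Icc.mpr ⟨hrs, by omega⟩, h.symm⟩
          · exact Finset.mem_image.mpr ⟨s+1, Finset.mem_Icc.mpr ⟨by omega, by omega⟩, h.symm⟩
        have hcard := Finset.card_le_card hsub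
        rw [Finset.card_univ, Fintype.card_fin] at hcard
        have h2 := (Finset.card_image_le (s := Finset.Icc r (r+r)) (f := j))
        rw [Nat.card_Icc] at h2
        omega
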